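/- Let S be a nonempty finite set of states, A a metric space of actions, P : S × A × S → ℝ with P(s'|s,a) ≥ 0 and ∑_{s'∈S} P(s'|s,a) = 1 for all (s,a), R : S × A → ℝ, γ ∈ [0,1), λ ∈ [0,1], and for each s let β̂(s) ⊆ β̃(s) ⊆ A be nonempty finite subsets satisfying the ε_a-closeness condition: for every s and every a₁ ∈ β̃(s) there exists a₂ ∈ β̂(s) with dist(a₁,a₂) ≤ ε_a. Define (T_In Q)(s,a) = R(s,a) + γ ∑_{s'} P(s'|s,a)·max_{a'∈β̂(s')} Q(s',a') and (T_DMG Q)(s,a) = R(s,a) + γ ∑_{s'} P(s'|s,a)·[λ·max_{a'∈β̃(s')} Q(s',a') + (1−λ)·max_{a'∈β̂(s')} Q(s',a')]. Let (Q̂^k)_{k≥0} and (Q^k)_{k≥0} be sequences of functions S × A → ℝ such that: Q̂⁰ = Q⁰; every Q̂^k is K_Q-Lipschitz in the action (|Q̂^k(s,a₁) − Q̂^k(s,a₂)| ≤ K_Q·dist(a₁,a₂) for all s, a₁, a₂, with K_Q ≥ 0); and for every k ≥ 1, Q̂^k(s,a) = (T_DMG Q̂^{k−1})(s,a) and Q^k(s,a)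 = (T_In Q^{k−1})(s,a) for all (s,a) with a ∈ β̂(s). Then for every k ≥ 1, every s ∈ S, and every a ∈ β̂(s): Q^k(s,a) ≤ Q̂^k(s,a) ≤ Q^k(s,a) + (λ·ε_a·K_Q·γ/(1−γ))·(1 − γ^k). -/

import Mathlib

/-- Limited overestimation (Theorem 6): under worst-case generalization, the DMG iterates
`Q̂^k` are sandwiched at in-sample pairs between the in-sample iterates `Q^k` and
`Q^k + (λ·ε_a·K_Q·γ/(1−γ))·(1−γ^k)`. -/
theorem dmg_limited_overestimation
    {S A : Type*} [Fintype S] [Nonempty S] [MetricSpace A]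
    (P : S → A → S → ℝ) (R : S → A → ℝ) (γ lam : ℝ)
    (hγ0 : 0 ≤ γ) (hγ1 : γ < 1) (hlam0 : 0 ≤ lam) (hlam1 : lam ≤ 1)
    (hPpos : ∀ s a s', 0 ≤ P s a s') (hPsum : ∀ s a, ∑ s' : S, P s a s' = 1)
    (βhat βtil : S → Finset A)
    (hβhat : ∀ s, (βhat s).Nonempty) (hβtil : ∀ s, (βtil s).Nonempty)
    (hsub : ∀ s, βhat s ⊆ βtil s)
    (εa : ℝ)
    (hclose : ∀ s, ∀ a₁ ∈ βtil s, ∃ a₂ ∈ βhat s, dist a₁ a₂ ≤ εa)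
    (TIn TDMG : (S → A → ℝ) → S → A → ℝ)
    (hTIn : ∀ Q s a, TIn Q s a =
      R s a + γ * ∑ s' : S, P s a s' * (βhat s').sup' (hβhat s') (fun a' => Q s' a'))
    (hTDMG : ∀ Q s a, TDMG Q s a =
      R s a + γ * ∑ s' : S, P s a s' *
        (lam * (βtil s').sup' (hβtil s') (fun a' => Q s' a') +
          (1 - lam) * (βhat s').sup' (hβhat s') (fun a' => Q s' a')))
    (K_Q : ℝ) (hKQ : 0 ≤ K_Q)
    (Qhat Qin : ℕ → S → A → ℝ)
    (hinit : Qhat 0 = Qin 0)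
    (hlip : ∀ k s a₁ a₂, |Qhat k s a₁ - Qhat k s a₂| ≤ K_Q * dist a₁ a₂)
    (hrecDMG : ∀ k, 1 ≤ k → ∀ s, ∀ a ∈ βhat s, Qhat k s a = TDMG (Qhat (k - 1)) s a)
    (hrecIn : ∀ k, 1 ≤ k → ∀ s, ∀ a ∈ βhat s, Qin k s a = TIn (Qin (k - 1)) s a) :
    ∀ k, 1 ≤ k → ∀ s, ∀ a ∈ βhat s,
      Qin k s a ≤ Qhat k s a ∧
      Qhat k s a ≤ Qin k s a + lam * εa * K_Q * γ / (1 - γ) * (1 - γ ^ k) := by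
  have hε : 0 ≤ εa := by
    obtain ⟨s⟩ := (inferInstance : Nonempty S)
    obtain ⟨a, ha⟩ := hβhat s
    obtain ⟨a₂, _, hd⟩ := hclose s a (hsub s ha)
    exact le_trans dist_nonneg hd
  have hγpos : (0:ℝ) < 1 - γ := by linarith
  -- one-step lemma
  have step : ∀ (k : ℕ) (d : ℝ), 0 ≤ d →
      (∀ s, ∀ a ∈ βhat s, Qin k s a ≤ Qhat k s a ∧ Qhat k s a ≤ Qin k s a + d) →
      ∀ s, ∀ a ∈ βhat s, Qin (k+1) s a ≤ Qhat (k+1) s a ∧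
        Qhat (k+1) s a ≤ Qin (k+1) s a + γ * (d + lam * (K_Q * εa)) := by
    intro k d hd IH s a ha
    have hk1 : 1 ≤ k + 1 := Nat.le_add_left 1 k
    rw [hrecDMG (k+1) hk1 s a ha, hrecIn (k+1) hk1 s a ha]
    simp only [Nat.add_sub_cancel]
    rw [hTIn, hTDMG]
    have hbr : ∀ s' : S,
        (βhat s').sup' (hβhat s') (fun a' => Qin k s' a') ≤
          lam * (βtil s').sup' (hβtil s') (fun a' => Qhat k s' a') +
            (1 - lam) * (βhat s').sup' (hβhat s') (fun a' => Qhat k s' a') ∧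
        lam * (βtil s').sup' (hβtil s') (fun a' => Qhat k s' a') +
            (1 - lam) * (βhat s').sup' (hβhat s') (fun a' => Qhat k s' a') ≤
          (βhat s').sup' (hβhat s') (fun a' => Qin k s' a') + (d + lam * (K_Q * εa)) := by
      intro s'
      set Bin := (βhat s').sup' (hβhat s') (fun a' => Qin k s' a') with hBin
      set Bh := (βhat s').sup' (hβhat s') (fun a' => Qhat k s' a') with hBh
      set Bt := (βtil s').sup' (hβtil s') (fun a' => Qhat k s' a') with hBt
      have h1 : Bin ≤ Bh := by
        apply Finset.sup'_le
        intro b hb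
        exact le_trans (IH s' b hb).1 (Finset.le_sup' _ hb)
      have h2 : Bh ≤ Bin + d := by
        apply Finset.sup'_le
        intro b hb
        exact le_trans (IH s' b hb).2 (by
          have := Finset.le_sup' (fun a' => Qin k s' a') hb
          linarith)
      have h3 : Bh ≤ Bt := by
        apply Finset.sup'_le
        intro b hb
        exact Finset.le_sup' _ (hsub s' hb)
      have h4 : Bt ≤ Bh + K_Q * εa := by
        apply Finset.sup'_le
        intro b hb
        obtain ⟨a₂, ha₂, hdist⟩ := hclose s' b hb
        have hl := hlip k s' b a₂
        have : Qhat k s' b ≤ Qhat k s' a₂ + K_Q * dist b a₂ := by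
          have := abs_le.mp hl
          linarith [this.1, this.2]
        have h5 : Qhat k s' a₂ ≤ Bh := Finset.le_sup' _ ha₂
        have h6 : K_Q * dist b a₂ ≤ K_Q * εa := mul_le_mul_of_nonneg_left hdist hKQ
        linarith
      constructor
      · nlinarith
      · nlinarith
    constructor
    · apply add_le_add_right
      apply mul_le_mul_of_nonneg_left _ hγ0
      apply Finset.sum_le_sum
      intro s' _
      exact mul_le_mul_of_nonneg_left (hbr s').1 (hPpos s a s')
    · have hsum : ∑ s' : S, P s a s' *
          (lam * (βtil s').sup' (hβtil s') (fun a' => Qhat k s' a') +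
            (1 - lam) * (βhat s').sup' (hβhat s') (fun a' => Qhat k s' a')) ≤
          (∑ s' : S, P s a s' * (βhat s').sup' (hβhat s') (fun a' => Qin k s' a'))
            + (d + lam * (K_Q * εa)) := by
        have h1 : ∑ s' : S, P s a s' *
            (lam * (βtil s').sup' (hβtil s') (fun a' => Qhat k s' a') +
              (1 - lam) * (βhat s').sup' (hβhat s') (fun a' => Qhat k s' a')) ≤
            ∑ s' : S, P s a s' *
              ((βhat s').sup' (hβhat s') (fun a' => Qin k s' a') + (d + lam * (K_Q * εa))) := by
          apply Finset.sum_le_sum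
          intro s' _
          exact mul_le_mul_of_nonneg_left (hbr s').2 (hPpos s a s')
        have h2 : ∑ s' : S, P s a s' *
            ((βhat s').sup' (hβhat s') (fun a' => Qin k s' a') + (d + lam * (K_Q * εa))) =
            (∑ s' : S, P s a s' * (βhat s').sup' (hβhat s') (fun a' => Qin k s' a'))
              + (d + lam * (K_Q * εa)) := by
          simp only [mul_add, Finset.sum_add_distrib, ← Finset.sum_mul, hPsum s a, one_mul]
        linarith
      have := mul_le_mul_of_nonneg_left hsum hγ0
      rw [mul_add] at this
      linarith
  intro k hk
  induction k, hk using Nat.le_induction with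
  | base =>
    intro s a ha
    have h0 : ∀ s, ∀ a ∈ βhat s, Qin 0 s a ≤ Qhat 0 s a ∧ Qhat 0 s a ≤ Qin 0 s a + 0 := by
      intro s a _
      rw [hinit]
      exact ⟨le_refl _, by linarith⟩
    obtain ⟨h1, h2⟩ := step 0 0 le_rfl h0 s a ha
    refine ⟨h1, ?_⟩
    have heq : γ * (0 + lam * (K_Q * εa)) = lam * εa * K_Q * γ / (1 - γ) * (1 - γ ^ 1) := by
      field_simp
      ring
    linarith
  | succ n hn IH =>
    intro s a ha
    have hd : 0 ≤ lam * εa * K_Q * γ / (1 - γ) * (1 - γ ^ n) := by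
      apply mul_nonneg
      · apply div_nonneg _ (le_of_lt hγpos)
        positivity
      · have := pow_le_one₀ hγ0 (le_of_lt hγ1) (n := n)
        linarith
    obtain ⟨h1, h2⟩ := step n _ hd IH s a ha
    refine ⟨h1, ?_⟩
    have heq : γ * (lam * εa * K_Q * γ / (1 - γ) * (1 - γ ^ n) + lam * (K_Q * εa)) =
        lam * εa * K_Q * γ / (1 - γ) * (1 - γ ^ (n + 1)) := by
      field_simp
      ring
    linarith
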